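/- Inscribed polygon setup: let n ≥ 3, o : E, ρ > 0, and let α : Fin n → ℝ be strictly increasing with α (n−1) − α 0 < 2π; define vertices v : ZMod n → E by v k = o + ρ • (Real.cos (α k̄), Real.sin (α k̄)), where k̄ ∈ {0, …, n−1} is the canonical representative of k. Suppose the point reflection about o maps the vertex set onto itself: (Equiv.pointReflection o) '' Set.range v = Set.range v. Then n is even, and for every i : ZMod n one has v (i + n/2) = Equiv.pointReflection o (v i) = 2•o − v i; consequently, for every i, the edge from v (i + n/2) to v (i + n/2 + 1) is parallel and of equal length to the edge from v i to v (i+1), with opposite orientation: v (i + n/2 + 1) − v (i + n/2) = −(v (i+1) − v i). -/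

import Mathlib

noncomputable abbrev E : Type := EuclideanSpace ℝ (Fin 2)

/-- In a skew symmetric inscribed polygon (vertex set mapped onto itself by the point
reflection about the center `o`), the number of vertices is even, the antipode of the
vertex `v i` is `v (i + n/2)`, and every edge has a parallel edge of equal length with
opposite orientation. -/
theorem skew_symmetric_inscribed_polygon_antipodal_edges
    (n : ℕ) (hn : 3 ≤ n) (o : E) (ρ : ℝ) (hρ : 0 < ρ)
    (α : Fin n → ℝ) (hα : StrictMono α)
    (hspan : α ⟨n - 1, by omega⟩ - α ⟨0, by omega⟩ < 2 * Real.pi)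
    (v : ZMod n → E)
    (hv : ∀ k : Fin n, v ((k : ℕ) : ZMod n) =
      o + ρ • (WithLp.equiv 2 (Fin 2 → ℝ)).symm ![Real.cos (α k), Real.sin (α k)])
    (hsym : (Equiv.pointReflection o) '' Set.range v = Set.range v) :
    Even n ∧ ∀ i : ZMod n,
      v (i + ((n / 2 : ℕ) : ZMod n)) = Equiv.pointReflection o (v i) ∧
      Equiv.pointReflection o (v i) = (2 : ℕ) • o - v i ∧
      v (i + ((n / 2 : ℕ) : ZMod n) + 1) - v (i + ((n / 2 : ℕ) : ZMod n)) =
        -(v (i + 1) - v i) := by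
  haveI : NeZero n := ⟨by omega⟩
  have hπ := Real.pi_pos
  set π := Real.pi with hπdef
  set c : ℝ := α ⟨0, by omega⟩ with hc
  have hbd : ∀ k : Fin n, c ≤ α k ∧ α k < c + 2 * π := by
    intro k
    refine ⟨hα.monotone (by simp [Fin.le_def]), ?_⟩
    have h1 : α k ≤ α ⟨n - 1, by omega⟩ := hα.monotone (by simp [Fin.le_def]; omega)
    linarith
  set f : Fin n → E := fun k =>
    o + ρ • (WithLp.equiv 2 (Fin 2 → ℝ)).symm ![Real.cos (α k), Real.sin (α k)] with hfdef
  have hv' : ∀ (j : ℕ) (h : j < n), v ((j : ZMod n)) = f ⟨j, h⟩ := by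
    intro j h
    simp only [hfdef]
    exact hv ⟨j, h⟩
  have hrange : Set.range v = Set.range f := by
    ext x
    constructor
    · rintro ⟨i, rfl⟩
      exact ⟨⟨i.val, ZMod.val_lt i⟩, by rw [← hv' i.val (ZMod.val_lt i), ZMod.natCast_rightInverse i]⟩
    · rintro ⟨k, rfl⟩
      exact ⟨((k.val : ℕ) : ZMod n), by rw [hv' k.val k.isLt]⟩
  -- extracting coordinates
  have hcoords : ∀ x y x' y' : ℝ,
      (WithLp.equiv 2 (Fin 2 → ℝ)).symm ![x, y] = (WithLp.equiv 2 (Fin 2 → ℝ)).symm ![x', y'] →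
      x = x' ∧ y = y' := by
    intro x y x' y' h
    have h2 : ![x, y] = ![x', y'] := (WithLp.equiv 2 (Fin 2 → ℝ)).symm.injective h
    exact ⟨by simpa using congrFun h2 0, by simpa using congrFun h2 1⟩
  -- the angle of a vertex is determined mod 2π
  have hangeq : ∀ a b : Fin n, (∃ k : ℤ, α a - α b = 2 * π * k) → a = b := by
    intro a b ⟨k, hk⟩
    have hba := hbd a
    have hbb := hbd b
    have e1 : ((k : ℝ)) < 1 := by nlinarith
    have e2 : (-1 : ℝ) < k := by nlinarith
    have e1' : k < 1 := by exact_mod_cast e1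
    have e2' : -1 < k := by exact_mod_cast e2
    have hk0 : k = 0 := by omega
    subst hk0
    push_cast at hk
    exact hα.injective (by linarith)
  have finj : Function.Injective f := by
    intro a b h
    have h2 : ρ • (WithLp.equiv 2 (Fin 2 → ℝ)).symm ![Real.cos (α a), Real.sin (α a)]
        = ρ • (WithLp.equiv 2 (Fin 2 → ℝ)).symm ![Real.cos (α b), Real.sin (α b)] := by
      have h' : f a - f b = 0 := by rw [h]; abel
      simp only [hfdef] at h'
      have : (o + ρ • (WithLp.equiv 2 (Fin 2 → ℝ)).symm ![Real.cos (α a), Real.sin (α a)]) -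
          (o + ρ • (WithLp.equiv 2 (Fin 2 → ℝ)).symm ![Real.cos (α b), Real.sin (α b)]) =
          ρ • (WithLp.equiv 2 (Fin 2 → ℝ)).symm ![Real.cos (α a), Real.sin (α a)] -
          ρ • (WithLp.equiv 2 (Fin 2 → ℝ)).symm ![Real.cos (α b), Real.sin (α b)] := by abel
      rw [this] at h'
      exact sub_eq_zero.mp h'
    have h3 := smul_right_injective E hρ.ne' h2
    obtain ⟨hcos, hsin⟩ := hcoords _ _ _ _ h3
    apply hangeq
    rw [← Real.Angle.angle_eq_iff_two_pi_dvd_sub]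
    exact Real.Angle.cos_sin_inj hcos hsin
  -- the reflection of a vertex through o
  have hrefl : ∀ x : E, Equiv.pointReflection o x = (2 : ℕ) • o - x := by
    intro x
    rw [Equiv.pointReflection_apply, vsub_eq_sub, vadd_eq_add, two_smul]
    abel
  -- antipodal pairs: angles differ by ±π
  have hpm : ∀ a b : Fin n, f a = (2 : ℕ) • o - f b → α a = α b + π ∨ α a = α b - π := by
    intro a b h
    have h2 : ρ • (WithLp.equiv 2 (Fin 2 → ℝ)).symm ![Real.cos (α a), Real.sin (α a)]
        = ρ • (WithLp.equiv 2 (Fin 2 → ℝ)).symm ![Real.cos (α b + π), Real.sin (α b + π)] := by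
      have hneg : (WithLp.equiv 2 (Fin 2 → ℝ)).symm ![Real.cos (α b + π), Real.sin (α b + π)]
          = -((WithLp.equiv 2 (Fin 2 → ℝ)).symm ![Real.cos (α b), Real.sin (α b)]) := by
        apply (WithLp.equiv 2 (Fin 2 → ℝ)).injective
        funext j
        fin_cases j <;>
          simp [WithLp.equiv_symm_apply, WithLp.equiv_apply, PiLp.toLp_apply, PiLp.neg_apply,
            Real.cos_add_pi, Real.sin_add_pi, hπdef]
      rw [hneg, smul_neg]
      have h' : f a = (2 : ℕ) • o - f b := h
      simp only [hfdef] at h'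
      rw [two_smul] at h'
      have : ρ • (WithLp.equiv 2 (Fin 2 → ℝ)).symm ![Real.cos (α a), Real.sin (α a)] =
          ((o + o - (o + ρ • (WithLp.equiv 2 (Fin 2 → ℝ)).symm ![Real.cos (α b), Real.sin (α b)]))
          - o) := by rw [← h']; abel
      rw [this]; abel
    have h3 := smul_right_injective E hρ.ne' h2
    obtain ⟨hcos, hsin⟩ := hcoords _ _ _ _ h3
    have hang : (α a : Real.Angle) = ((α b + π : ℝ) : Real.Angle) :=
      Real.Angle.cos_sin_inj hcos hsin
    obtain ⟨k, hk⟩ := Real.Angle.angle_eq_iff_two_pi_dvd_sub.mp hang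
    have hba := hbd a
    have hbb := hbd b
    have e1 : (2 * (k : ℝ)) < 1 := by nlinarith
    have e2 : (-3 : ℝ) < 2 * k := by nlinarith
    have e1' : 2 * k < 1 := by exact_mod_cast e1
    have e2' : -3 < 2 * k := by exact_mod_cast e2
    have hk01 : k = 0 ∨ k = -1 := by omega
    rcases hk01 with rfl | rfl
    · left; push_cast at hk; linarith
    · right; push_cast at hk; linarith
  -- choose the antipodal vertex
  have hex : ∀ a : Fin n, ∃ b : Fin n, f b = (2 : ℕ) • o - f a := by
    intro a
    have h1 : Equiv.pointReflection o (f a) ∈ Set.range v := by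
      rw [← hsym]
      exact ⟨f a, hrange ▸ Set.mem_range_self a, rfl⟩
    rw [hrange] at h1
    obtain ⟨b, hb⟩ := h1
    exact ⟨b, by rw [hb, hrefl]⟩
  choose σ hσ using hex
  have hinv : ∀ a, σ (σ a) = a := by
    intro a
    apply finj
    rw [hσ (σ a), hσ a]
    abel
  have hplus : ∀ a : Fin n, α a < c + π → α (σ a) = α a + π := by
    intro a ha
    rcases hpm (σ a) a (hσ a) with h | h
    · exact h
    · exfalso
      have h1 := (hbd (σ a)).1
      linarith
  have hminus : ∀ a : Fin n, c + π ≤ α a → α (σ a) = α a - π := by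
    intro a ha
    rcases hpm (σ a) a (hσ a) with h | h
    · exfalso
      have h1 := (hbd (σ a)).2
      linarith
    · exact h
  have h0lt : (0 : ℕ) < n := by omega
  have hα0 : α ⟨0, h0lt⟩ = c := rfl
  have hexm : ∃ j : ℕ, ∃ h : j < n, c + π ≤ α ⟨j, h⟩ := by
    refine ⟨(σ ⟨0, h0lt⟩).val, (σ ⟨0, h0lt⟩).isLt, ?_⟩
    rw [Fin.eta, hplus ⟨0, h0lt⟩ (by rw [hα0]; linarith), hα0]
  set m := Nat.find hexm with hmdef
  obtain ⟨hmn, hmge⟩ := Nat.find_spec hexm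
  have hsmall : ∀ k : Fin n, k.val < m → α k < c + π := by
    intro k hk
    by_contra h
    push_neg at h
    exact Nat.find_min hexm hk ⟨k.isLt, by rwa [Fin.eta]⟩
  have hbig : ∀ k : Fin n, m ≤ k.val → c + π ≤ α k := by
    intro k hk
    refine le_trans hmge (hα.monotone ?_)
    exact hk
  have hm0 : 0 < m := by
    rcases Nat.eq_zero_or_pos m with h | h
    · exfalso
      have := hbig ⟨0, h0lt⟩ (by omega)
      rw [hα0] at this
      linarith
    · exact h
  have hup : ∀ k : Fin n, k.val < m → m ≤ (σ k).val := by
    intro k hk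
    by_contra h
    push_neg at h
    have h1 := hsmall (σ k) h
    have h2 := hplus k (hsmall k hk)
    have h3 := (hbd k).1
    linarith
  have hdown : ∀ k : Fin n, m ≤ k.val → (σ k).val < m := by
    intro k hk
    by_contra h
    push_neg at h
    have h1 := hbig (σ k) h
    have h2 := hminus k (hbig k hk)
    have h3 := (hbd k).2
    linarith
  have hmn' : m < n := hmn
  -- lower bound on σ over small indices
  have L1 : ∀ j : ℕ, ∀ hj : j < m, ∀ hj2 : j < n, m + j ≤ (σ ⟨j, hj2⟩).val := by
    intro j
    induction j with
    | zero => intro hj hj2; simpa using hup ⟨0, hj2⟩ hj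
    | succ j ih =>
      intro hj hj2
      have hj' : j < m := by omega
      have hj2' : j < n := by omega
      have h1 := ih hj' hj2'
      have hlt : σ ⟨j, hj2'⟩ < σ ⟨j + 1, hj2⟩ := by
        rw [← hα.lt_iff_lt, hplus _ (hsmall _ hj'), hplus _ (hsmall _ hj)]
        have : α ⟨j, hj2'⟩ < α ⟨j + 1, hj2⟩ := hα (by simp [Fin.lt_def])
        linarith
      have h2 := Fin.lt_def.mp hlt
      omega
  -- lower bound on σ over big indices
  have L2 : ∀ j : ℕ, m ≤ j → ∀ hj2 : j < n, j - m ≤ (σ ⟨j, hj2⟩).val := by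
    intro j hj
    induction j, hj using Nat.le_induction with
    | base => intro hj2; omega
    | succ j hj ih =>
      intro hj2
      have hj2' : j < n := by omega
      have h1 := ih hj2'
      have hlt : σ ⟨j, hj2'⟩ < σ ⟨j + 1, hj2⟩ := by
        rw [← hα.lt_iff_lt, hminus _ (hbig _ hj), hminus _ (hbig _ (by show m ≤ j + 1; omega))]
        have : α ⟨j, hj2'⟩ < α ⟨j + 1, hj2⟩ := hα (by simp [Fin.lt_def])
        linarith
      have h2 := Fin.lt_def.mp hlt
      omega
  -- exact value of σ on small indices
  have E1 : ∀ j : ℕ, ∀ hj : j < m, ∀ hj2 : j < n, (σ ⟨j, hj2⟩).val = m + j := by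
    intro j hj hj2
    have h1 := L1 j hj hj2
    have hb : m ≤ (σ ⟨j, hj2⟩).val := hup _ hj
    have h2 := L2 (σ ⟨j, hj2⟩).val hb (σ ⟨j, hj2⟩).isLt
    rw [Fin.eta, hinv] at h2
    have hbv : (⟨j, hj2⟩ : Fin n).val = j := rfl
    omega
  have hn2 : n = 2 * m := by
    have hup2 : 2 * m ≤ n := by
      have hj2 : m - 1 < n := by omega
      have e := E1 (m - 1) (by omega) hj2
      have h2 := (σ ⟨m - 1, hj2⟩).isLt
      omega
    have hlow : n ≤ 2 * m := by
      have hj2 : n - 1 < n := by omega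
      have hb : m ≤ (⟨n - 1, hj2⟩ : Fin n).val := by show m ≤ n - 1; omega
      have hs := hdown ⟨n - 1, hj2⟩ hb
      have e := E1 (σ ⟨n - 1, hj2⟩).val hs (σ ⟨n - 1, hj2⟩).isLt
      rw [Fin.eta, hinv] at e
      have hbv : (⟨n - 1, hj2⟩ : Fin n).val = n - 1 := rfl
      omega
    omega
  have hσval : ∀ (j : ℕ) (hj2 : j < n), (σ ⟨j, hj2⟩).val = (j + m) % n := by
    intro j hj2
    rcases lt_or_ge j m with h | h
    · rw [E1 j h hj2, Nat.mod_eq_of_lt (by omega)]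
      omega
    · have hval : (σ ⟨j, hj2⟩).val = j - m := by
        have hs := hdown ⟨j, hj2⟩ h
        have e := E1 (σ ⟨j, hj2⟩).val hs (σ ⟨j, hj2⟩).isLt
        rw [Fin.eta, hinv] at e
        have hbv : (⟨j, hj2⟩ : Fin n).val = j := rfl
        omega
      have h1 : j + m = (j - m) + n := by omega
      rw [hval, h1, Nat.add_mod_right, Nat.mod_eq_of_lt (by omega)]
  have hhalf : n / 2 = m := by omega
  -- the main pointwise identity
  have hmain : ∀ i : ZMod n, v (i + ((n / 2 : ℕ) : ZMod n)) = (2 : ℕ) • o - v i := by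
    intro i
    have hivlt : i.val < n := ZMod.val_lt i
    have hi : ((i.val : ℕ) : ZMod n) = i := ZMod.natCast_rightInverse i
    have hlt : (i.val + m) % n < n := Nat.mod_lt _ (by omega)
    have key : i + ((n / 2 : ℕ) : ZMod n) = (((i.val + m) % n : ℕ) : ZMod n) := by
      rw [ZMod.natCast_mod, hhalf]
      conv_lhs => rw [← hi]
      push_cast
      ring
    rw [key, hv' _ hlt]
    have hfin : (⟨(i.val + m) % n, hlt⟩ : Fin n) = σ ⟨i.val, hivlt⟩ :=
      Fin.ext (hσval i.val hivlt).symm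
    rw [hfin, hσ]
    have hvi : v i = f ⟨i.val, hivlt⟩ := by
      rw [← hv' i.val hivlt, hi]
    rw [hvi]
  refine ⟨⟨m, by omega⟩, fun i => ⟨?_, hrefl (v i), ?_⟩⟩
  · rw [hrefl, hmain]
  · have h1 := hmain i
    have h2 := hmain (i + 1)
    have e : i + ((n / 2 : ℕ) : ZMod n) + 1 = (i + 1) + ((n / 2 : ℕ) : ZMod n) := by ring
    rw [e, h1, h2]
    abel
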